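/- Let R be a linearly ordered commutative ring with unit. The group of n×n upper triangular matrices over R with positive invertible diagonal entries admits a linear order making it a linearly ordered group (i.e., the order is invariant under left and right multiplication). -/

import Mathlib

open Function

/-- Position key: order upper-triangular positions by interval length `j - i`
first, then by `i`. -/
private def pidx (n : ℕ) (p : Fin n × Fin n) : ℕ :=
  (n + (p.2 : ℕ) - (p.1 : ℕ)) * n + (p.1 : ℕ)

private lemma pidx_inj {n : ℕ} : Function.Injective (pidx n) := by
  rintro ⟨i, j⟩ ⟨i', j'⟩ h
  simp only [pidx] at h
  have hi := i.isLt
  have hi' := i'.isLt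
  have hj := j.isLt
  have hj' := j'.isLt
  have hmod : ((n + (j : ℕ) - i) * n + (i : ℕ)) % n = ((n + (j' : ℕ) - i') * n + (i' : ℕ)) % n := by
    rw [h]
  have e1 : ∀ a b : ℕ, (a * n + b) % n = b % n := fun a b => by
    rw [Nat.add_comm, Nat.add_mul_mod_self_right]
  rw [e1, e1, Nat.mod_eq_of_lt hi, Nat.mod_eq_of_lt hi'] at hmod
  have h2 : (n + (j : ℕ) - i) * n = (n + (j' : ℕ) - i') * n := by omega
  have hn : 0 < n := lt_of_le_of_lt (Nat.zero_le _) hi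
  have h3 : n + (j : ℕ) - i = n + (j' : ℕ) - i' := Nat.eq_of_mul_eq_mul_right hn h2
  have hjj : (j : ℕ) = (j' : ℕ) := by omega
  simp [Prod.ext_iff, Fin.ext_iff, hjj, hmod]

/-- If `[k,l] ⊆ [i,j]` strictly, then the key of `(k,l)` is smaller. -/
private lemma pidx_lt {n : ℕ} {i j k l : Fin n}
    (hik : i ≤ k) (hlj : l ≤ j) (hkl : k ≤ l) (hne : ¬((k : ℕ) = i ∧ (l : ℕ) = j)) :
    pidx n (k, l) < pidx n (i, j) := by
  simp only [pidx]
  have hi := i.isLt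
  have hk := k.isLt
  have hik' : (i : ℕ) ≤ k := hik
  have hlj' : (l : ℕ) ≤ j := hlj
  have hkl' : (k : ℕ) ≤ l := hkl
  have hab : n + (l : ℕ) - k < n + (j : ℕ) - i := by omega
  calc (n + (l : ℕ) - k) * n + (k : ℕ) < (n + (l : ℕ) - k) * n + n := by omega
    _ = (n + (l : ℕ) - k + 1) * n := by ring
    _ ≤ (n + (j : ℕ) - i) * n := Nat.mul_le_mul_right n hab
    _ ≤ (n + (j : ℕ) - i) * n + (i : ℕ) := Nat.le_add_right _ _

/-- Key computation: if `X` and `Y` agree at all positions of smaller key than `(i,j)`,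
then the `(i,j)` entry of `A*X*B - A*Y*B` is `A i i * (X i j - Y i j) * B j j`. -/
private lemma key_diff {R : Type*} [CommRing R] [LinearOrder R] [IsStrictOrderedRing R] {n : ℕ}
    (A X Y B : Matrix (Fin n) (Fin n) R)
    (hA : ∀ i j : Fin n, j < i → A i j = 0)
    (hB : ∀ i j : Fin n, j < i → B i j = 0)
    (hX : ∀ i j : Fin n, j < i → X i j = 0)
    (hY : ∀ i j : Fin n, j < i → Y i j = 0)
    (i j : Fin n)
    (hΔ : ∀ k l : Fin n, pidx n (k, l) < pidx n (i, j) → X k l = Y k l) :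
    (A * X * B) i j - (A * Y * B) i j = A i i * (X i j - Y i j) * B j j := by
  have hexp : ∀ M : Matrix (Fin n) (Fin n) R,
      (A * M * B) i j = ∑ l : Fin n, ∑ k : Fin n, A i k * M k l * B l j := by
    intro M
    simp only [Matrix.mul_apply, Finset.sum_mul]
  rw [hexp X, hexp Y, ← Finset.sum_sub_distrib]
  have hterm : ∀ l : Fin n,
      (∑ k : Fin n, A i k * X k l * B l j) - (∑ k : Fin n, A i k * Y k l * B l j)
        = ∑ k : Fin n, A i k * (X k l - Y k l) * B l j := by
    intro l
    rw [← Finset.sum_sub_distrib]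
    exact Finset.sum_congr rfl fun k _ => by ring
  simp only [hterm]
  rw [Finset.sum_eq_single j]
  · rw [Finset.sum_eq_single i]
    · intro k _ hki
      -- l = j, k ≠ i
      rcases lt_or_ge k i with hlt | hge
      · rw [hA i k hlt]; ring
      · rcases lt_or_ge j k with hjk | hkj
        · rw [hX k j hjk, hY k j hjk]; ring
        · have : X k j = Y k j := by
            apply hΔ
            exact pidx_lt hge le_rfl hkj (by
              intro ⟨h1, _⟩
              exact hki (Fin.ext h1))
          rw [this]; ring
    · intro h; exact absurd (Finset.mem_univ i) h
  · intro l _ hlj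
    -- l ≠ j : show inner sum is 0
    apply Finset.sum_eq_zero
    intro k _
    rcases lt_or_ge j l with hjl | hlj'
    · rw [hB l j hjl]; ring
    · rcases lt_or_ge k i with hki | hik
      · rw [hA i k hki]; ring
      · rcases lt_or_ge l k with hlk | hkl
        · rw [hX k l hlk, hY k l hlk]; ring
        · have : X k l = Y k l := by
            apply hΔ
            exact pidx_lt hik hlj' hkl (by
              intro ⟨_, h2⟩
              exact hlj (Fin.ext h2))
          rw [this]; ring
  · intro h; exact absurd (Finset.mem_univ j) h

theorem upper_triangular_group_orderable (R : Type*) [CommRing R] [LinearOrder R] [IsStrictOrderedRing R] (n : ℕ) :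
    ∃ lo : LinearOrder {M : Matrix (Fin n) (Fin n) R //
        (∀ i j : Fin n, j < i → M i j = 0) ∧ ∀ i : Fin n, 0 < M i i ∧ IsUnit (M i i)},
      ∀ (A B X Y X' Y' : {M : Matrix (Fin n) (Fin n) R //
          (∀ i j : Fin n, j < i → M i j = 0) ∧ ∀ i : Fin n, 0 < M i i ∧ IsUnit (M i i)}),
        X'.val = A.val * X.val * B.val → Y'.val = A.val * Y.val * B.val →
        lo.lt X Y → lo.lt X' Y' := by
  classical
  set T := {M : Matrix (Fin n) (Fin n) R //
      (∀ i j : Fin n, j < i → M i j = 0) ∧ ∀ i : Fin n, 0 < M i i ∧ IsUnit (M i i)} with hT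
  -- encode a matrix as a function ℕ → R along the position key
  set f : T → Lex (ℕ → R) :=
    fun M => toLex (Function.extend (pidx n) (fun p => M.val p.1 p.2) 0) with hf
  have hfap : ∀ (M : T) (p : Fin n × Fin n),
      (ofLex (f M)) (pidx n p) = M.val p.1 p.2 := by
    intro M p
    simp only [hf, ofLex_toLex]
    exact pidx_inj.extend_apply _ _ p
  have hfap' : ∀ (M : T) (m : ℕ), (¬∃ p, pidx n p = m) → (ofLex (f M)) m = 0 := by
    intro M m hm
    simp only [hf, ofLex_toLex]
    exact Function.extend_apply' _ _ _ hm
  have hinj : Function.Injective f := by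
    intro M N h
    have : ∀ p : Fin n × Fin n, M.val p.1 p.2 = N.val p.1 p.2 := by
      intro p
      rw [← hfap M p, ← hfap N p, h]
    exact Subtype.ext (Matrix.ext fun i j => this (i, j))
  refine ⟨LinearOrder.lift' f hinj, ?_⟩
  intro A B X Y X' Y' hX' hY' hlt
  -- unfold the lifted lt
  have hlt' : f X < f Y := hlt
  show f X' < f Y'
  obtain ⟨m, hbelow, hm⟩ := hlt'
  -- m must be in the range of pidx
  have hmem : ∃ p : Fin n × Fin n, pidx n p = m := by
    by_contra hc
    rw [show (f X) m = (ofLex (f X)) m from rfl, show (f Y) m = (ofLex (f Y)) m from rfl,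
      hfap' X m hc, hfap' Y m hc] at hm
    exact lt_irrefl _ hm
  obtain ⟨p, rfl⟩ := hmem
  have hXYbelow : ∀ k l : Fin n, pidx n (k, l) < pidx n p → X.val k l = Y.val k l := by
    intro k l h
    have := hbelow _ h
    rwa [show (f X) (pidx n (k,l)) = (ofLex (f X)) (pidx n (k,l)) from rfl,
      show (f Y) (pidx n (k,l)) = (ofLex (f Y)) (pidx n (k,l)) from rfl,
      hfap X (k,l), hfap Y (k,l)] at this
  have hXYp : X.val p.1 p.2 < Y.val p.1 p.2 := by
    rw [show (f X) (pidx n p) = (ofLex (f X)) (pidx n p) from rfl,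
      show (f Y) (pidx n p) = (ofLex (f Y)) (pidx n p) from rfl,
      hfap X p, hfap Y p] at hm
    exact hm
  -- key computation at an arbitrary position
  have hkey : ∀ q : Fin n × Fin n, pidx n q ≤ pidx n p →
      X'.val q.1 q.2 - Y'.val q.1 q.2
        = A.val q.1 q.1 * (X.val q.1 q.2 - Y.val q.1 q.2) * B.val q.2 q.2 := by
    intro q hq
    rw [hX', hY']
    exact key_diff A.val X.val Y.val B.val A.2.1 B.2.1 X.2.1 Y.2.1 q.1 q.2
      (fun k l h => hXYbelow k l (lt_of_lt_of_le h hq))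
  refine ⟨pidx n p, ?_, ?_⟩
  · intro m' hm'
    rcases Classical.em (∃ q : Fin n × Fin n, pidx n q = m') with ⟨q, rfl⟩ | hc
    · show (ofLex (f X')) (pidx n q) = (ofLex (f Y')) (pidx n q)
      rw [hfap X' q, hfap Y' q]
      have h0 : X.val q.1 q.2 - Y.val q.1 q.2 = 0 := by
        rw [hXYbelow q.1 q.2 hm']
        ring
      have := hkey q (le_of_lt hm')
      rw [h0] at this
      have : X'.val q.1 q.2 - Y'.val q.1 q.2 = 0 := by rw [this]; ring
      linarith [this]
    · show (ofLex (f X')) m' = (ofLex (f Y')) m'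
      rw [hfap' X' m' hc, hfap' Y' m' hc]
  · show (ofLex (f X')) (pidx n p) < (ofLex (f Y')) (pidx n p)
    rw [hfap X' p, hfap Y' p]
    have hdiff := hkey p le_rfl
    have hA : 0 < A.val p.1 p.1 := (A.2.2 p.1).1
    have hB : 0 < B.val p.2 p.2 := (B.2.2 p.2).1
    have hneg : A.val p.1 p.1 * (X.val p.1 p.2 - Y.val p.1 p.2) * B.val p.2 p.2 < 0 := by
      have h1 : X.val p.1 p.2 - Y.val p.1 p.2 < 0 := by linarith
      have := mul_pos hA hB
      nlinarith
    linarith [hdiff, hneg]
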